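/- Let S_n be a sequence of nondegenerate d-simplices in ℝ^d with vertices A_0^n,...,A_d^n, and suppose the normalized edge vectors t_{XY}^n = (Y^n − X^n)/|Y^n − X^n| converge for every pair of vertices. If some sequence of dihedral angles of a fixed subsimplex conv{A_0^n,...,A_{d'}^n} tends to π, then the limit vectors t_{XY} for pairs X,Y among A_0,...,A_{d'} span a space of dimension at most d'−1, and any d of the limit vectors t_{XY} (over all pairs) span a space of dimension at most d−1; hence sin_d of any d limiting edge-direction vectors is 0. -/

import Mathlib

open MeasureTheory Metric Set Filter
open scoped Classical

/-- `k`-dimensional (Hausdorff) measure of a subset of `ℝ^d`. -/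
noncomputable def mea (d : ℕ) (r : ℝ) (s : Set (EuclideanSpace ℝ (Fin d))) : ℝ :=
  (μH[r] s).toReal

/-- The Eriksson `m`-sine of the simplex `conv{A 0, …, A m} ⊆ ℝ^d` at the vertex `A i`. -/
noncomputable def erikSin (d m : ℕ) (A : Fin (m + 1) → EuclideanSpace ℝ (Fin d))
    (i : Fin (m + 1)) : ℝ :=
  (m : ℝ) ^ (m - 1) * (mea d m (convexHull ℝ (Set.range A))) ^ (m - 1) /
    ((Nat.factorial (m - 1)) *
      ∏ j ∈ Finset.univ.erase i, mea d ((m : ℝ) - 1) (convexHull ℝ (A '' {k | k ≠ j})))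

/-- The extension of the Eriksson `d`-sine to `d`-tuples of vectors in `ℝ^d`, vanishing
on linearly dependent tuples. -/
noncomputable def sinTuple (d : ℕ) (t : Fin d → EuclideanSpace ℝ (Fin d)) : ℝ :=
  if LinearIndependent ℝ t then erikSin d d (Fin.cons 0 t) 0 else 0

/-- The dihedral angle of the simplex with vertices `B 0, …, B (m+2)` in `ℝ^d` between
the facets opposite the vertices `B i` and `B j`: the angle between the components of
`B i` and `B j` orthogonal to the affine span of the remaining vertices (the ridge). -/
noncomputable def dihedralAngle (d m : ℕ) (B : Fin (m + 3) → EuclideanSpace ℝ (Fin d))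
    (i j : Fin (m + 3)) : ℝ :=
  haveI : Nonempty (affineSpan ℝ (B '' {k | k ≠ i ∧ k ≠ j})) := by
    have hne : (({i, j} : Finset (Fin (m + 3)))ᶜ).Nonempty := by
      rw [← Finset.card_pos, Finset.card_compl]
      have := Finset.card_insert_le i ({j} : Finset (Fin (m + 3)))
      simp only [Finset.card_singleton, Fintype.card_fin] at *
      omega
    obtain ⟨k, hk⟩ := hne
    simp only [Finset.mem_compl, Finset.mem_insert, Finset.mem_singleton, not_or] at hk
    exact ⟨⟨B k, subset_affineSpan ℝ _ ⟨k, ⟨hk.1, hk.2⟩, rfl⟩⟩⟩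
  InnerProductGeometry.angle
    ((B i : EuclideanSpace ℝ (Fin d)) -
      (EuclideanGeometry.orthogonalProjection (affineSpan ℝ (B '' {k | k ≠ i ∧ k ≠ j}))
        (B i) : EuclideanSpace ℝ (Fin d)))
    ((B j : EuclideanSpace ℝ (Fin d)) -
      (EuclideanGeometry.orthogonalProjection (affineSpan ℝ (B '' {k | k ≠ i ∧ k ≠ j}))
        (B j) : EuclideanSpace ℝ (Fin d)))

namespace DegDih

open scoped Topology RealInnerProductSpace

noncomputable section

variable {E : Type*} [NormedAddCommGroup E] [InnerProductSpace ℝ E]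

/-- Bolzano–Weierstrass helper. -/
lemma sub_vec {F : Type*} [NormedAddCommGroup F] [ProperSpace F] (x : ℕ → F) (C : ℝ)
    (hx : ∀ n, ‖x n‖ ≤ C) :
    ∃ a, ∃ φ : ℕ → ℕ, StrictMono φ ∧ Tendsto (x ∘ φ) atTop (𝓝 a) := by
  obtain ⟨a, -, φ, hφ, h⟩ := tendsto_subseq_of_bounded (isBounded_closedBall (x := (0:F)) (r := C))
    (x := x) (fun n => mem_closedBall_zero_iff.2 (hx n))
  exact ⟨a, φ, hφ, h⟩

variable {ι : Type*}

/-- The set of limit directions among vertices in `S`. -/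
def dirSet (L : ι → ι → E) (S : Set ι) : Set E :=
  {v | ∃ X Y, X ∈ S ∧ Y ∈ S ∧ X ≠ Y ∧ v = L X Y}

/-- The span of the limit directions among vertices in `S`. -/
def dirSpan (L : ι → ι → E) (S : Set ι) : Submodule ℝ E :=
  Submodule.span ℝ (dirSet L S)

lemma dirSpan_mono (L : ι → ι → E) {S T : Set ι} (h : S ⊆ T) : dirSpan L S ≤ dirSpan L T := by
  apply Submodule.span_mono
  rintro v ⟨X, Y, hX, hY, hXY, rfl⟩
  exact ⟨X, Y, h hX, h hY, hXY, rfl⟩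

lemma mem_dirSpan (L : ι → ι → E) {S : Set ι} {X Y : ι} (hX : X ∈ S) (hY : Y ∈ S)
    (hXY : X ≠ Y) : L X Y ∈ dirSpan L S :=
  Submodule.subset_span ⟨X, Y, hX, hY, hXY, rfl⟩

section Conv

variable (P : ℕ → ι → E) (L : ι → ι → E)

/-- All normalized edge directions converge. -/
def Cvg : Prop :=
  ∀ X Y : ι, X ≠ Y → Tendsto (fun n => ‖P n Y - P n X‖⁻¹ • (P n Y - P n X)) atTop (𝓝 (L X Y))

/-- Vertices are distinct at each stage. -/
def Inj : Prop := ∀ (n : ℕ) (X Y : ι), X ≠ Y → P n X ≠ P n Y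

variable {P L}

lemma Cvg.norm_L (hL : Cvg P L) (hP : Inj P) {X Y : ι} (hXY : X ≠ Y) : ‖L X Y‖ = 1 := by
  have h1 : Tendsto (fun n => ‖‖P n Y - P n X‖⁻¹ • (P n Y - P n X)‖) atTop (𝓝 ‖L X Y‖) :=
    (hL X Y hXY).norm
  have h2 : ∀ n, ‖‖P n Y - P n X‖⁻¹ • (P n Y - P n X)‖ = 1 := by
    intro n
    have hne : P n Y - P n X ≠ 0 := sub_ne_zero.2 (hP n Y X (Ne.symm hXY))
    rw [norm_smul, norm_inv, norm_norm, inv_mul_cancel₀ (norm_ne_zero_iff.2 hne)]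
  rw [funext h2] at h1
  exact tendsto_nhds_unique h1 tendsto_const_nhds

lemma Cvg.L_symm (hL : Cvg P L) {X Y : ι} (hXY : X ≠ Y) : L Y X = -L X Y := by
  have h1 := (hL X Y hXY).neg
  have h2 := hL Y X (Ne.symm hXY)
  have : (fun n => ‖P n X - P n Y‖⁻¹ • (P n X - P n Y))
      = fun n => -(‖P n Y - P n X‖⁻¹ • (P n Y - P n X)) := by
    funext n
    rw [norm_sub_rev, ← smul_neg, neg_sub]
  rw [this] at h2
  exact tendsto_nhds_unique h2 h1

lemma Cvg.L_ne_zero (hL : Cvg P L) (hP : Inj P) {X Y : ι} (hXY : X ≠ Y) : L X Y ≠ 0 := by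
  intro h
  have := hL.norm_L hP hXY
  rw [h, norm_zero] at this
  norm_num at this

/-- Triangle dependence lemma: among the three limit directions of a triangle,
either the direction `i → j` is in the span of the two directions from `X`, or those two
directions coincide. -/
lemma Cvg.triangle_dep (hL : Cvg P L) (hP : Inj P) {X i j : ι}
    (hXi : X ≠ i) (hXj : X ≠ j) (hij : i ≠ j) :
    L i j ∈ Submodule.span ℝ ({L X i, L X j} : Set E) ∨ L X i = L X j := by
  set a : ℕ → ℝ := fun n => ‖P n i - P n X‖ with ha
  set b : ℕ → ℝ := fun n => ‖P n j - P n X‖ with hb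
  set c : ℕ → ℝ := fun n => ‖P n j - P n i‖ with hc
  have hapos : ∀ n, 0 < a n := fun n =>
    norm_pos_iff.2 (sub_ne_zero.2 (hP n i X (Ne.symm hXi)))
  have hbpos : ∀ n, 0 < b n := fun n =>
    norm_pos_iff.2 (sub_ne_zero.2 (hP n j X (Ne.symm hXj)))
  have hcpos : ∀ n, 0 < c n := fun n =>
    norm_pos_iff.2 (sub_ne_zero.2 (hP n j i (Ne.symm hij)))
  have hspos : ∀ n, 0 < a n + b n := fun n => add_pos (hapos n) (hbpos n)
  -- bounded ratios
  have htri : ∀ n, c n ≤ a n + b n := by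
    intro n
    have hid : P n j - P n i = (P n j - P n X) - (P n i - P n X) := by abel
    show ‖P n j - P n i‖ ≤ a n + b n
    rw [hid]
    calc ‖(P n j - P n X) - (P n i - P n X)‖ ≤ ‖P n j - P n X‖ + ‖P n i - P n X‖ :=
          norm_sub_le _ _
      _ = a n + b n := by rw [add_comm]
  obtain ⟨α, φ₁, hφ₁, hα⟩ := sub_vec (fun n => a n / (a n + b n)) 1 (by
    intro n
    rw [Real.norm_eq_abs, abs_of_nonneg (div_nonneg (hapos n).le (hspos n).le)]
    rw [div_le_one (hspos n)]
    linarith [(hbpos n).le])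
  obtain ⟨γ, φ₂, hφ₂, hγ⟩ := sub_vec (fun n => c (φ₁ n) / (a (φ₁ n) + b (φ₁ n))) 1 (by
    intro n
    rw [Real.norm_eq_abs, abs_of_nonneg (div_nonneg (hcpos _).le (hspos _).le)]
    rw [div_le_one (hspos _)]
    exact htri _)
  set φ := φ₁ ∘ φ₂ with hφdef
  have hφ : StrictMono φ := hφ₁.comp hφ₂
  have hαφ : Tendsto (fun n => a (φ n) / (a (φ n) + b (φ n))) atTop (𝓝 α) := by
    have := hα.comp hφ₂.tendsto_atTop
    exact this
  have hγφ : Tendsto (fun n => c (φ n) / (a (φ n) + b (φ n))) atTop (𝓝 γ) := hγ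
  have hβφ : Tendsto (fun n => b (φ n) / (a (φ n) + b (φ n))) atTop (𝓝 (1 - α)) := by
    have : ∀ n, b (φ n) / (a (φ n) + b (φ n)) = 1 - a (φ n) / (a (φ n) + b (φ n)) := by
      intro n
      rw [eq_sub_iff_add_eq, ← add_div, add_comm (b _) (a _), div_self (hspos _).ne']
    rw [funext this]
    exact tendsto_const_nhds.sub hαφ
  -- key identity
  have hkey : ∀ n,
      (c n / (a n + b n)) • ((c n)⁻¹ • (P n j - P n i))
        = (b n / (a n + b n)) • ((b n)⁻¹ • (P n j - P n X))
          - (a n / (a n + b n)) • ((a n)⁻¹ • (P n i - P n X)) := by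
    intro n
    rw [smul_smul, smul_smul, smul_smul]
    rw [div_mul_eq_mul_div, mul_inv_cancel₀ (hcpos n).ne']
    rw [div_mul_eq_mul_div, mul_inv_cancel₀ (hbpos n).ne']
    rw [div_mul_eq_mul_div, mul_inv_cancel₀ (hapos n).ne']
    rw [← smul_sub]
    congr 1
    abel
  -- limits of both sides
  have hLhs : Tendsto (fun n => (c (φ n) / (a (φ n) + b (φ n))) •
      ((c (φ n))⁻¹ • (P (φ n) j - P (φ n) i))) atTop (𝓝 (γ • L i j)) := by
    exact hγφ.smul ((hL i j hij).comp hφ.tendsto_atTop)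
  have hRhs : Tendsto (fun n => (b (φ n) / (a (φ n) + b (φ n))) •
      ((b (φ n))⁻¹ • (P (φ n) j - P (φ n) X))
      - (a (φ n) / (a (φ n) + b (φ n))) • ((a (φ n))⁻¹ • (P (φ n) i - P (φ n) X)))
      atTop (𝓝 ((1 - α) • L X j - α • L X i)) := by
    exact (hβφ.smul ((hL X j hXj).comp hφ.tendsto_atTop)).sub
      (hαφ.smul ((hL X i hXi).comp hφ.tendsto_atTop))
  have hkeyφ : (fun n => (c (φ n) / (a (φ n) + b (φ n))) •
      ((c (φ n))⁻¹ • (P (φ n) j - P (φ n) i)))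
      = fun n => (b (φ n) / (a (φ n) + b (φ n))) • ((b (φ n))⁻¹ • (P (φ n) j - P (φ n) X))
        - (a (φ n) / (a (φ n) + b (φ n))) • ((a (φ n))⁻¹ • (P (φ n) i - P (φ n) X)) :=
    funext fun n => hkey (φ n)
  rw [hkeyφ] at hLhs
  have heq : γ • L i j = (1 - α) • L X j - α • L X i := tendsto_nhds_unique hLhs hRhs
  by_cases hγ0 : γ = 0
  · right
    rw [hγ0, zero_smul] at heq
    have heq' : (1 - α) • L X j = α • L X i := by
      have := heq.symm
      rwa [sub_eq_zero] at this
    have hnorth : ‖(1 - α) • L X j‖ = ‖α • L X i‖ := by rw [heq']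
    rw [norm_smul, norm_smul, hL.norm_L hP hXj, hL.norm_L hP hXi, mul_one, mul_one] at hnorth
    -- α ∈ [0,1] since it's a limit of numbers in [0,1]
    have hα01 : 0 ≤ α ∧ α ≤ 1 := by
      constructor
      · exact le_of_tendsto_of_tendsto tendsto_const_nhds hαφ
          (Eventually.of_forall fun n => div_nonneg (hapos _).le (hspos _).le)
      · exact le_of_tendsto_of_tendsto hαφ tendsto_const_nhds
          (Eventually.of_forall fun n => by
            rw [div_le_one (hspos _)]; linarith [(hbpos (φ n)).le])
    have h12 : α = 1/2 := by
      rw [Real.norm_eq_abs, Real.norm_eq_abs, abs_of_nonneg (by linarith [hα01.1, hα01.2]),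
        abs_of_nonneg hα01.1] at hnorth
      linarith
    have h2 : (1 - α) = α := by rw [h12]; norm_num
    rw [h2] at heq'
    have := smul_right_injective E (by rw [h12]; norm_num : α ≠ 0) heq'
    exact this.symm
  · left
    have : L i j = (γ⁻¹ * (1 - α)) • L X j - (γ⁻¹ * α) • L X i := by
      have := congrArg (fun v => γ⁻¹ • v) heq
      simp only [smul_smul, inv_mul_cancel₀ hγ0, one_smul, smul_sub] at this
      exact this
    rw [Submodule.mem_span_pair]
    exact ⟨-(γ⁻¹ * α), γ⁻¹ * (1 - α), by rw [this]; module⟩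


lemma Cvg.add_vertex [DecidableEq ι] (hL : Cvg P L) (hP : Inj P) (S : Finset ι) (hS : S.Nonempty)
    (v : ι) (hv : v ∉ S) :
    ∃ u : E, ∀ X ∈ S, L v X ∈ dirSpan L ↑S ⊔ (ℝ ∙ u) := by
  have hmin : ∀ n, ∃ k ∈ S, ∀ l ∈ S, ‖P n k - P n v‖ ≤ ‖P n l - P n v‖ := fun n =>
    S.exists_min_image (fun X => ‖P n X - P n v‖) hS
  choose f hfS hfmin using hmin
  obtain ⟨y, hy⟩ := Finite.exists_infinite_fiber (fun n => (⟨f n, hfS n⟩ : {x // x ∈ S}))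
  rw [Set.infinite_coe_iff] at hy
  obtain ⟨φ₀, hφ₀, hφ₀y⟩ := Filter.extraction_of_frequently_atTop
    (Nat.frequently_atTop_iff_infinite.2 hy)
  set k₀ : ι := ↑y with hk₀
  have hk₀S : k₀ ∈ S := y.2
  have hf0 : ∀ n, f (φ₀ n) = k₀ := by
    intro n
    have := hφ₀y n
    simp only [Set.mem_preimage, Set.mem_singleton_iff] at this
    exact congrArg Subtype.val this
  have hvk₀ : v ≠ k₀ := fun h => hv (h ▸ hk₀S)
  refine ⟨L v k₀, fun X hX => ?_⟩
  by_cases hXk : X = k₀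
  · subst hXk
    exact Submodule.mem_sup_right (Submodule.mem_span_singleton_self _)
  have hvX : v ≠ X := fun h => hv (h ▸ hX)
  set a : ℕ → ℝ := fun n => ‖P n k₀ - P n v‖ with ha
  set b : ℕ → ℝ := fun n => ‖P n X - P n v‖ with hb
  set c : ℕ → ℝ := fun n => ‖P n X - P n k₀‖ with hc
  have hapos : ∀ n, 0 < a n := fun n => norm_pos_iff.2 (sub_ne_zero.2 (hP n k₀ v (Ne.symm hvk₀)))
  have hbpos : ∀ n, 0 < b n := fun n => norm_pos_iff.2 (sub_ne_zero.2 (hP n X v (Ne.symm hvX)))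
  have hcpos : ∀ n, 0 < c n := fun n => norm_pos_iff.2 (sub_ne_zero.2 (hP n X k₀ hXk))
  have hab : ∀ n, a (φ₀ n) ≤ b (φ₀ n) := by
    intro n
    have := hfmin (φ₀ n) X hX
    rwa [hf0 n] at this
  have hcb : ∀ n, c (φ₀ n) ≤ 2 * b (φ₀ n) := by
    intro n
    have h1 : P (φ₀ n) X - P (φ₀ n) k₀
        = (P (φ₀ n) X - P (φ₀ n) v) - (P (φ₀ n) k₀ - P (φ₀ n) v) := by abel
    show ‖P (φ₀ n) X - P (φ₀ n) k₀‖ ≤ 2 * b (φ₀ n)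
    rw [h1]
    calc ‖(P (φ₀ n) X - P (φ₀ n) v) - (P (φ₀ n) k₀ - P (φ₀ n) v)‖
        ≤ ‖P (φ₀ n) X - P (φ₀ n) v‖ + ‖P (φ₀ n) k₀ - P (φ₀ n) v‖ := norm_sub_le _ _
      _ ≤ b (φ₀ n) + b (φ₀ n) := add_le_add le_rfl (hab n)
      _ = 2 * b (φ₀ n) := by ring
  obtain ⟨α, φ₁, hφ₁, hα⟩ := sub_vec (fun n => a (φ₀ n) / b (φ₀ n)) 1 (by
    intro n
    rw [Real.norm_eq_abs, abs_of_nonneg (div_nonneg (hapos _).le (hbpos _).le),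
      div_le_one (hbpos _)]
    exact hab n)
  obtain ⟨γ, φ₂, hφ₂, hγ⟩ := sub_vec (fun n => c (φ₀ (φ₁ n)) / b (φ₀ (φ₁ n))) 2 (by
    intro n
    rw [Real.norm_eq_abs, abs_of_nonneg (div_nonneg (hcpos _).le (hbpos _).le),
      div_le_iff₀ (hbpos _)]
    calc c (φ₀ (φ₁ n)) ≤ 2 * b (φ₀ (φ₁ n)) := hcb _
      _ = 2 * b (φ₀ (φ₁ n)) := rfl
    )
  have hαφ : Tendsto (fun n => a (φ₀ (φ₁ (φ₂ n))) / b (φ₀ (φ₁ (φ₂ n)))) atTop (𝓝 α) :=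
    hα.comp hφ₂.tendsto_atTop
  have hγφ : Tendsto (fun n => c (φ₀ (φ₁ (φ₂ n))) / b (φ₀ (φ₁ (φ₂ n)))) atTop (𝓝 γ) := hγ
  have hφm : StrictMono (fun n => φ₀ (φ₁ (φ₂ n))) := hφ₀.comp (hφ₁.comp hφ₂)
  have hkey : ∀ n, (b n)⁻¹ • (P n X - P n v)
      = (c n / b n) • ((c n)⁻¹ • (P n X - P n k₀))
        + (a n / b n) • ((a n)⁻¹ • (P n k₀ - P n v)) := by
    intro n
    rw [smul_smul, smul_smul]
    have e1 : c n / b n * (c n)⁻¹ = (b n)⁻¹ := by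
      rw [div_mul_eq_mul_div, mul_inv_cancel₀ (hcpos n).ne', one_div]
    have e2 : a n / b n * (a n)⁻¹ = (b n)⁻¹ := by
      rw [div_mul_eq_mul_div, mul_inv_cancel₀ (hapos n).ne', one_div]
    rw [e1, e2, ← smul_add]
    congr 1
    abel
  have h1 : Tendsto (fun n => (b (φ₀ (φ₁ (φ₂ n))))⁻¹ • (P (φ₀ (φ₁ (φ₂ n))) X - P (φ₀ (φ₁ (φ₂ n))) v))
      atTop (𝓝 (L v X)) := (hL v X hvX).comp hφm.tendsto_atTop
  have h2 : Tendsto (fun n =>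
      (c (φ₀ (φ₁ (φ₂ n))) / b (φ₀ (φ₁ (φ₂ n)))) •
        ((c (φ₀ (φ₁ (φ₂ n))))⁻¹ • (P (φ₀ (φ₁ (φ₂ n))) X - P (φ₀ (φ₁ (φ₂ n))) k₀))
      + (a (φ₀ (φ₁ (φ₂ n))) / b (φ₀ (φ₁ (φ₂ n)))) •
        ((a (φ₀ (φ₁ (φ₂ n))))⁻¹ • (P (φ₀ (φ₁ (φ₂ n))) k₀ - P (φ₀ (φ₁ (φ₂ n))) v)))
      atTop (𝓝 (γ • L k₀ X + α • L v k₀)) :=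
    (hγφ.smul ((hL k₀ X (fun h => hXk h.symm)).comp hφm.tendsto_atTop)).add
      (hαφ.smul ((hL v k₀ hvk₀).comp hφm.tendsto_atTop))
  have hkeyφ : (fun n => (b (φ₀ (φ₁ (φ₂ n))))⁻¹ • (P (φ₀ (φ₁ (φ₂ n))) X - P (φ₀ (φ₁ (φ₂ n))) v))
      = fun n =>
      (c (φ₀ (φ₁ (φ₂ n))) / b (φ₀ (φ₁ (φ₂ n)))) •
        ((c (φ₀ (φ₁ (φ₂ n))))⁻¹ • (P (φ₀ (φ₁ (φ₂ n))) X - P (φ₀ (φ₁ (φ₂ n))) k₀))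
      + (a (φ₀ (φ₁ (φ₂ n))) / b (φ₀ (φ₁ (φ₂ n)))) •
        ((a (φ₀ (φ₁ (φ₂ n))))⁻¹ • (P (φ₀ (φ₁ (φ₂ n))) k₀ - P (φ₀ (φ₁ (φ₂ n))) v)) :=
    funext fun n => hkey _
  rw [hkeyφ] at h1
  have heq : L v X = γ • L k₀ X + α • L v k₀ := tendsto_nhds_unique h1 h2
  rw [heq]
  exact Submodule.add_mem _
    (Submodule.mem_sup_left (Submodule.smul_mem _ _
      (mem_dirSpan L (Finset.mem_coe.2 hk₀S) (Finset.mem_coe.2 hX) (fun h => hXk h.symm))))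
    (Submodule.mem_sup_right (Submodule.smul_mem _ _ (Submodule.mem_span_singleton_self _)))

variable [DecidableEq ι] [FiniteDimensional ℝ E]

lemma finrank_span_singleton_le' (u : E) : Module.finrank ℝ (ℝ ∙ u) ≤ 1 := by
  by_cases hu : u = 0
  · rw [hu, Submodule.span_zero_singleton]
    simp
  · rw [finrank_span_singleton hu]

lemma Cvg.finrank_insert_le (hL : Cvg P L) (hP : Inj P)
    (S : Finset ι) (hS : S.Nonempty) (v : ι) :
    Module.finrank ℝ (dirSpan L ↑(insert v S)) ≤ Module.finrank ℝ (dirSpan L ↑S) + 1 := by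
  by_cases hv : v ∈ S
  · rw [Finset.insert_eq_self.2 hv]
    exact Nat.le_succ _
  obtain ⟨u, hu⟩ := hL.add_vertex hP S hS v hv
  have hle : dirSpan L ↑(insert v S) ≤ dirSpan L ↑S ⊔ (ℝ ∙ u) := by
    apply Submodule.span_le.2
    rintro w ⟨X, Y, hX, hY, hXY, rfl⟩
    simp only [Finset.coe_insert, Set.mem_insert_iff, Finset.mem_coe] at hX hY
    rcases hX with hXv | hX <;> rcases hY with hYv | hY
    · exact absurd (hXv.trans hYv.symm) hXY
    · rw [hXv]
      exact hu Y hY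
    · rw [hYv, hL.L_symm (show v ≠ X from fun hh => hv (hh ▸ hX))]
      exact Submodule.neg_mem _ (hu X hX)
    · exact Submodule.mem_sup_left (mem_dirSpan L hX hY hXY)
  calc Module.finrank ℝ (dirSpan L ↑(insert v S))
      ≤ Module.finrank ℝ ↥(dirSpan L ↑S ⊔ (ℝ ∙ u)) := Submodule.finrank_mono hle
    _ ≤ Module.finrank ℝ (dirSpan L ↑S) + Module.finrank ℝ (ℝ ∙ u) :=
        Submodule.finrank_add_le_finrank_add_finrank _ _
    _ ≤ Module.finrank ℝ (dirSpan L ↑S) + 1 := by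
        have := finrank_span_singleton_le' u
        omega

lemma Cvg.finrank_le_card (hL : Cvg P L) (hP : Inj P) (S : Finset ι) (hS : S.Nonempty) :
    Module.finrank ℝ (dirSpan L ↑S) ≤ S.card - 1 := by
  induction hS using Finset.Nonempty.cons_induction with
  | singleton a =>
      have hempty : dirSet L ↑({a} : Finset ι) = ∅ := by
        ext w
        simp only [Set.mem_empty_iff_false, iff_false]
        rintro ⟨X, Y, hX, hY, hXY, rfl⟩
        simp only [Finset.coe_singleton, Set.mem_singleton_iff] at hX hY
        exact hXY (hX.trans hY.symm)
      rw [dirSpan, hempty, Submodule.span_empty]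
      simp
  | cons a S ha hS ih =>
      have h1 : (Finset.cons a S ha) = insert a S := by
        rw [Finset.cons_eq_insert]
      rw [h1]
      have h2 := hL.finrank_insert_le hP S hS a
      have h3 : (insert a S).card = S.card + 1 := Finset.card_insert_of_notMem ha
      have hcard : 1 ≤ S.card := Finset.card_pos.2 hS
      omega

lemma Cvg.finrank_grow (hL : Cvg P L) (hP : Inj P) :
    ∀ (m : ℕ) (S T : Finset ι), S.Nonempty → S ⊆ T → T.card - S.card = m →
    Module.finrank ℝ (dirSpan L ↑T) ≤ Module.finrank ℝ (dirSpan L ↑S) + m := by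
  intro m
  induction m with
  | zero =>
      intro S T hS hST h0
      have hcard := Finset.card_le_card hST
      have : S = T := Finset.eq_of_subset_of_card_le hST (by omega)
      rw [this]
      omega
  | succ m ih =>
      intro S T hS hST hm
      obtain ⟨v, hvT, hvS⟩ : ∃ v ∈ T, v ∉ S := by
        by_contra hc
        push_neg at hc
        have hTS : T ⊆ S := fun x hx => hc x hx
        have h1 := Finset.card_le_card hTS
        have h2 := Finset.card_le_card hST
        omega
      have hsub : insert v S ⊆ T := Finset.insert_subset hvT hST
      have hcard2 := Finset.card_le_card hsub
      have hicard : (insert v S).card = S.card + 1 := Finset.card_insert_of_notMem hvS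
      have h1 := ih (insert v S) T (Finset.insert_nonempty _ _) hsub (by omega)
      have h2 := hL.finrank_insert_le hP S hS v
      omega

end Conv


section Proj

variable [FiniteDimensional ℝ E]

/-- The residual of `y` after orthogonal projection to the affine span of `s`. -/
def resid (s : Set E) (hs : s.Nonempty) (y : E) : E :=
  haveI : Nonempty (affineSpan ℝ s) := by
    obtain ⟨p, hp⟩ := hs
    exact ⟨⟨p, subset_affineSpan ℝ s hp⟩⟩
  y - (EuclideanGeometry.orthogonalProjection (affineSpan ℝ s) y : E)

lemma resid_congr {s₁ s₂ : Set E} (h : s₁ = s₂) (hs₁ : s₁.Nonempty) (hs₂ : s₂.Nonempty)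
    (y : E) : resid s₁ hs₁ y = resid s₂ hs₂ y := by
  subst h; rfl

lemma resid_perp (s : Set E) (hs : s.Nonempty) (y : E) :
    ∀ z ∈ vectorSpan ℝ s, ⟪resid s hs y, z⟫ = 0 := by
  intro z hz
  haveI : Nonempty (affineSpan ℝ s) := by
    obtain ⟨p, hp⟩ := hs
    exact ⟨⟨p, subset_affineSpan ℝ s hp⟩⟩
  have h := EuclideanGeometry.vsub_orthogonalProjection_mem_direction_orthogonal
    (affineSpan ℝ s) y
  rw [← direction_affineSpan (k := ℝ)] at hz
  have h2 := (Submodule.mem_orthogonal _ _).1 h z hz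
  rw [real_inner_comm] at h2
  exact h2

lemma resid_sub_mem (s : Set E) (hs : s.Nonempty) (y : E) {p : E} (hp : p ∈ s) :
    y - p - resid s hs y ∈ vectorSpan ℝ s := by
  haveI : Nonempty (affineSpan ℝ s) := by
    obtain ⟨q, hq⟩ := hs
    exact ⟨⟨q, subset_affineSpan ℝ s hq⟩⟩
  have h1 : y - p - resid s hs y
      = (EuclideanGeometry.orthogonalProjection (affineSpan ℝ s) y : E) - p := by
    rw [resid]; abel
  rw [h1]
  have hproj := EuclideanGeometry.orthogonalProjection_mem
    (s := affineSpan ℝ s) y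
  have hp' : p ∈ affineSpan ℝ s := subset_affineSpan ℝ s hp
  have := AffineSubspace.vsub_mem_direction hproj hp'
  rw [← direction_affineSpan (k := ℝ)]
  exact this

/-- Finite linear combination as a linear map. -/
def combo {κ : Type*} [Fintype κ] (v : κ → E) : (κ → ℝ) →ₗ[ℝ] E where
  toFun c := ∑ l, c l • v l
  map_add' a b := by
    simp [add_smul, Finset.sum_add_distrib]
  map_smul' r a := by
    simp [smul_smul, Finset.smul_sum]

lemma combo_apply {κ : Type*} [Fintype κ] (v : κ → E) (c : κ → ℝ) :
    combo v c = ∑ l, c l • v l := rfl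

lemma combo_ker {κ : Type*} [Fintype κ] {v : κ → E} (hv : LinearIndependent ℝ v) :
    LinearMap.ker (combo v) = ⊥ := by
  rw [LinearMap.ker_eq_bot']
  intro c hc
  exact funext fun l => Fintype.linearIndependent_iff.1 hv c hc l

end Proj


section VHat

variable [FiniteDimensional ℝ E] {ι : Type*} [DecidableEq ι] {P : ℕ → ι → E} {L : ι → ι → E}

lemma Cvg.vhat_tendsto (hL : Cvg P L) (hP : Inj P) (K : Finset ι) (hK : K.Nonempty)
    (hU : ∀ n, Module.finrank ℝ (vectorSpan ℝ (P n '' ↑K)) = K.card - 1)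
    (hH : Module.finrank ℝ (dirSpan L ↑K) = K.card - 1)
    {x X : ι} (hx : x ∉ K) (hXK : X ∈ K)
    (hLn : L X x ∉ dirSpan L ↑K) :
    Tendsto (fun n => ‖resid (P n '' ↑K) ((Finset.coe_nonempty.2 hK).image (P n)) (P n x)‖⁻¹
        • resid (P n '' ↑K) ((Finset.coe_nonempty.2 hK).image (P n)) (P n x)) atTop
      (𝓝 (‖L X x - (Submodule.orthogonalProjectionOnto (dirSpan L ↑K) (L X x) : E)‖⁻¹
        • (L X x - (Submodule.orthogonalProjectionOnto (dirSpan L ↑K) (L X x) : E)))) := by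
  have hXx : X ≠ x := fun h => hx (h ▸ hXK)
  set H := dirSpan L ↑K with hHdef
  set winf : E := L X x - (Submodule.orthogonalProjectionOnto H (L X x) : E) with hwinfdef
  have hwinf_ne : winf ≠ 0 := by
    intro h0
    apply hLn
    have h1 : L X x = (Submodule.orthogonalProjectionOnto H (L X x) : E) := by
      rw [hwinfdef] at h0
      rwa [sub_eq_zero] at h0
    rw [h1]
    exact SetLike.coe_mem _
  -- basis of H chosen inside the direction set
  obtain ⟨bs, hbsub, hbspan, hbLI⟩ := exists_linearIndependent ℝ (dirSet L ↑K)
  have hbfin : bs.Finite := hbLI.set_finite_of_isNoetherian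
  haveI hbfint : Fintype ↥bs := hbfin.fintype
  have hHspan : Submodule.span ℝ bs = H := hbspan
  have hcard : Fintype.card ↥bs = K.card - 1 := by
    have h1 := finrank_span_set_eq_card hbLI
    rw [hHspan] at h1
    rw [Set.toFinset_card] at h1
    omega
  -- pairs generating the basis vectors
  have hpair : ∀ l : ↥bs, ∃ Y Z : ι, Y ∈ (↑K : Set ι) ∧ Z ∈ (↑K : Set ι) ∧ Y ≠ Z
      ∧ (l : E) = L Y Z := fun l => hbsub l.2
  choose Yf Zf hYf hZf hYZf hLf using hpair
  set u : ℕ → ↥bs → E := fun n l => ‖P n (Zf l) - P n (Yf l)‖⁻¹ • (P n (Zf l) - P n (Yf l))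
    with hudef
  have humem : ∀ n l, u n l ∈ vectorSpan ℝ (P n '' ↑K) := by
    intro n l
    apply Submodule.smul_mem
    have h1 : P n (Zf l) ∈ P n '' ↑K := Set.mem_image_of_mem _ (hZf l)
    have h2 : P n (Yf l) ∈ P n '' ↑K := Set.mem_image_of_mem _ (hYf l)
    have := vsub_mem_vectorSpan ℝ h1 h2
    exact this
  have hulim : ∀ l, Tendsto (fun n => u n l) atTop (𝓝 (l : E)) := by
    intro l
    rw [hLf l]
    exact hL (Yf l) (Zf l) (hYZf l)
  -- antilipschitz constant
  obtain ⟨K₀, hK₀pos, hK₀⟩ := (combo (fun l : ↥bs => (l : E))).exists_antilipschitzWith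
    (combo_ker hbLI)
  have hanti : ∀ c : ↥bs → ℝ, ‖c‖ ≤ K₀ * ‖combo (fun l : ↥bs => (l : E)) c‖ := by
    intro c
    have h1 := hK₀.le_mul_dist c 0
    rwa [dist_zero_right, map_zero, dist_zero_right] at h1
  set m : ℕ := Fintype.card ↥bs with hm
  set ε : ℝ := (((K₀ : ℝ) + 1) * ((m : ℝ) + 1) * 2)⁻¹ with hε
  have hεpos : 0 < ε := by positivity
  have hεK : (K₀ : ℝ) * m * ε ≤ 1 / 2 := by
    have hD : (0 : ℝ) < ((K₀ : ℝ) + 1) * ((m : ℝ) + 1) * 2 := by positivity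
    rw [hε, ← div_eq_mul_inv, div_le_iff₀ hD]
    have h0 : (0:ℝ) ≤ (K₀ : ℝ) := K₀.coe_nonneg
    have h1 : (0:ℝ) ≤ (m : ℝ) := Nat.cast_nonneg m
    nlinarith
  -- eventual closeness
  have hev : ∀ᶠ n in atTop, ∀ l : ↥bs, ‖u n l - (l : E)‖ < ε := by
    rw [eventually_all]
    intro l
    have h1 : Tendsto (fun n => ‖u n l - (l : E)‖) atTop (𝓝 0) := by
      have h2 := (tendsto_sub_nhds_zero_iff.2 (hulim l)).norm
      rwa [norm_zero] at h2
    exact h1.eventually_lt_const hεpos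
  -- quantitative bound
  have hquant : ∀ n, (∀ l : ↥bs, ‖u n l - (l : E)‖ < ε) →
      ∀ c : ↥bs → ℝ, ‖c‖ ≤ 2 * K₀ * ‖∑ l, c l • u n l‖ := by
    intro n hn c
    have hdiff : ‖combo (fun l : ↥bs => (l : E)) c - ∑ l, c l • u n l‖ ≤ m * ε * ‖c‖ := by
      have h1 : combo (fun l : ↥bs => (l : E)) c - ∑ l, c l • u n l
          = ∑ l, c l • ((l : E) - u n l) := by
        rw [combo_apply, ← Finset.sum_sub_distrib]
        congr 1
        funext l
        rw [smul_sub]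
      rw [h1]
      calc ‖∑ l, c l • ((l : E) - u n l)‖ ≤ ∑ l, ‖c l • ((l : E) - u n l)‖ :=
            norm_sum_le _ _
        _ ≤ ∑ _l : ↥bs, ‖c‖ * ε := Finset.sum_le_sum (fun l _ => by
            rw [norm_smul]
            have h2 : ‖c l‖ ≤ ‖c‖ := norm_le_pi_norm c l
            have h3 : ‖(l : E) - u n l‖ ≤ ε := by
              rw [norm_sub_rev]; exact (hn l).le
            exact mul_le_mul h2 h3 (norm_nonneg _) (norm_nonneg _))
        _ = m * ε * ‖c‖ := by
            rw [Finset.sum_const, Finset.card_univ, nsmul_eq_mul]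
            ring
    have h3 := hanti c
    have h4 : ‖combo (fun l : ↥bs => (l : E)) c‖ ≤ ‖∑ l, c l • u n l‖ + m * ε * ‖c‖ := by
      calc ‖combo (fun l : ↥bs => (l : E)) c‖
          = ‖(∑ l, c l • u n l) + (combo (fun l : ↥bs => (l : E)) c - ∑ l, c l • u n l)‖ := by
            rw [add_sub_cancel]
        _ ≤ ‖∑ l, c l • u n l‖ + ‖combo (fun l : ↥bs => (l : E)) c - ∑ l, c l • u n l‖ :=
            norm_add_le _ _
        _ ≤ ‖∑ l, c l • u n l‖ + m * ε * ‖c‖ := by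
            have := hdiff
            linarith
    have h5 : (0:ℝ) ≤ (K₀ : ℝ) := K₀.coe_nonneg
    have h6 : ‖c‖ ≤ K₀ * ‖∑ l, c l • u n l‖ + K₀ * (m * ε * ‖c‖) := by
      calc ‖c‖ ≤ K₀ * ‖combo (fun l : ↥bs => (l : E)) c‖ := h3
        _ ≤ K₀ * (‖∑ l, c l • u n l‖ + m * ε * ‖c‖) := by
            exact mul_le_mul_of_nonneg_left h4 h5
        _ = K₀ * ‖∑ l, c l • u n l‖ + K₀ * (m * ε * ‖c‖) := by ring
    have h7 : (K₀ : ℝ) * (m * ε * ‖c‖) ≤ (1/2) * ‖c‖ := by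
      have := mul_le_mul_of_nonneg_right hεK (norm_nonneg c)
      calc (K₀ : ℝ) * (m * ε * ‖c‖) = ((K₀ : ℝ) * m * ε) * ‖c‖ := by ring
        _ ≤ (1/2) * ‖c‖ := this
    linarith
  -- the span property
  have hspanU : ∀ n, (∀ l : ↥bs, ‖u n l - (l : E)‖ < ε) →
      Submodule.span ℝ (Set.range (u n)) = vectorSpan ℝ (P n '' ↑K) := by
    intro n hn
    have hLIu : LinearIndependent ℝ (u n) := by
      rw [Fintype.linearIndependent_iff]
      intro c hc
      have h1 := hquant n hn c
      rw [hc, norm_zero, mul_zero] at h1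
      have h2 : c = 0 := by
        have := norm_le_zero_iff.1 h1
        exact this
      intro l
      rw [h2]
      rfl
    apply Submodule.eq_of_le_of_finrank_le
    · rw [Submodule.span_le]
      rintro w ⟨l, rfl⟩
      exact humem n l
    · rw [finrank_span_eq_card hLIu, hU n, ← hm, hcard]
  -- residual setup
  set sK : ℕ → Set E := fun n => P n '' ↑K with hsK
  have hsKne : ∀ n, (sK n).Nonempty := fun n => (Finset.coe_nonempty.2 hK).image (P n)
  set vv : ℕ → E := fun n => resid (sK n) (hsKne n) (P n x) with hvv
  set ρ : ℕ → ℝ := fun n => ‖P n x - P n X‖ with hρ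
  have hρpos : ∀ n, 0 < ρ n := fun n =>
    norm_pos_iff.2 (sub_ne_zero.2 (hP n x X (Ne.symm hXx)))
  set w : ℕ → E := fun n => (ρ n)⁻¹ • vv n with hw
  set z : ℕ → E := fun n => (ρ n)⁻¹ • (P n x - P n X) - w n with hz
  have hXmem : ∀ n, P n X ∈ sK n := fun n => Set.mem_image_of_mem _ (Finset.mem_coe.2 hXK)
  have hzmem : ∀ n, z n ∈ vectorSpan ℝ (sK n) := by
    intro n
    have h1 := resid_sub_mem (sK n) (hsKne n) (P n x) (hXmem n)
    have h2 : z n = (ρ n)⁻¹ • (P n x - P n X - vv n) := by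
      rw [hz, hw, smul_sub]
    rw [h2]
    exact Submodule.smul_mem _ _ h1
  have hwperp : ∀ n, ∀ y ∈ vectorSpan ℝ (sK n), ⟪w n, y⟫ = 0 := by
    intro n y hy
    rw [hw]
    rw [real_inner_smul_left, resid_perp (sK n) (hsKne n) (P n x) y hy, mul_zero]
  have hznorm : ∀ n, ‖z n‖ ≤ 1 := by
    intro n
    have hts : (ρ n)⁻¹ • (P n x - P n X) = z n + w n := by rw [hz, sub_add_cancel]
    have hunit : ‖(ρ n)⁻¹ • (P n x - P n X)‖ = 1 := by
      rw [norm_smul, norm_inv, norm_norm, inv_mul_cancel₀ (hρpos n).ne']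
    have hinner : ⟪z n, w n⟫ = 0 := by
      rw [real_inner_comm]
      exact hwperp n (z n) (hzmem n)
    have hpyth := norm_add_sq_real (z n) (w n)
    rw [hinner, mul_zero, add_zero] at hpyth
    rw [hts] at hunit
    nlinarith [norm_nonneg (z n), norm_nonneg (w n), sq_nonneg (‖w n‖)]
  -- coefficient choice
  have hcex : ∀ n, ∃ c : ↥bs → ℝ, (∀ l : ↥bs, ‖u n l - (l : E)‖ < ε) →
      ((∑ l, c l • u n l = z n) ∧ ‖c‖ ≤ 2 * K₀) := by
    intro n
    by_cases hn : ∀ l : ↥bs, ‖u n l - (l : E)‖ < ε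
    · have hzn : z n ∈ Submodule.span ℝ (Set.range (u n)) := by
        rw [hspanU n hn]
        exact hzmem n
      obtain ⟨c, hc⟩ := (Submodule.mem_span_range_iff_exists_fun ℝ).1 hzn
      refine ⟨c, fun _ => ⟨hc, ?_⟩⟩
      have h1 := hquant n hn c
      rw [hc] at h1
      calc ‖c‖ ≤ 2 * K₀ * ‖z n‖ := h1
        _ ≤ 2 * K₀ * 1 := by
            apply mul_le_mul_of_nonneg_left (hznorm n)
            positivity
        _ = 2 * K₀ := mul_one _
    · exact ⟨0, fun hn' => absurd hn' hn⟩
  choose cf hcf using hcex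
  -- main convergence of w
  have hwtendsto : Tendsto w atTop (𝓝 winf) := by
    apply tendsto_of_subseq_tendsto
    intro ns hns
    have hevns : ∀ᶠ k in atTop, ∀ l : ↥bs, ‖u (ns k) l - (l : E)‖ < ε := hns.eventually hev
    have hfreq : ∃ᶠ k in atTop, cf (ns k) ∈ Metric.closedBall (0 : ↥bs → ℝ) (2 * K₀) := by
      apply Filter.Eventually.frequently
      apply hevns.mono
      intro k hk
      exact mem_closedBall_zero_iff.2 (hcf (ns k) hk).2
    obtain ⟨cinf, -, ms, hms, hcinf⟩ :=
      tendsto_subseq_of_frequently_bounded (isBounded_closedBall) hfreq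
    refine ⟨ms, ?_⟩
    have hnsms : Tendsto (fun k => ns (ms k)) atTop atTop := hns.comp hms.tendsto_atTop
    -- limit of z along the subsequence
    set zlim : E := ∑ l, cinf l • (l : E) with hzlim
    have hczu : Tendsto (fun k => ∑ l, cf (ns (ms k)) l • u (ns (ms k)) l) atTop (𝓝 zlim) := by
      apply tendsto_finset_sum
      intro l _
      apply Tendsto.smul
      · exact (tendsto_pi_nhds.1 hcinf) l
      · exact (hulim l).comp hnsms
    have hzeq : ∀ᶠ k in atTop, ∑ l, cf (ns (ms k)) l • u (ns (ms k)) l = z (ns (ms k)) := by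
      apply (hnsms.eventually hev).mono
      intro k hk
      exact (hcf (ns (ms k)) hk).1
    have hztend : Tendsto (fun k => z (ns (ms k))) atTop (𝓝 zlim) := by
      apply hczu.congr'
      exact hzeq
    -- limit of w along the subsequence
    have hwz : ∀ n, w n = (ρ n)⁻¹ • (P n x - P n X) - z n := by
      intro n
      rw [hz, sub_sub_cancel]
    have httend : Tendsto (fun k => (ρ (ns (ms k)))⁻¹ • (P (ns (ms k)) x - P (ns (ms k)) X))
        atTop (𝓝 (L X x)) := (hL X x hXx).comp hnsms
    have hwtend : Tendsto (fun k => w (ns (ms k))) atTop (𝓝 (L X x - zlim)) := by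
      have h1 := httend.sub hztend
      apply h1.congr
      intro k
      rw [hwz]
    -- identify the limit
    have hzlimH : zlim ∈ H := by
      rw [hzlim]
      apply Submodule.sum_mem
      intro l _
      apply Submodule.smul_mem
      exact Submodule.subset_span (hbsub l.2)
    have hperp : ∀ y ∈ H, ⟪L X x - zlim, y⟫ = 0 := by
      have hperpl : ∀ l : ↥bs, ⟪L X x - zlim, (l : E)⟫ = 0 := by
        intro l
        have h1 : Tendsto (fun k => ⟪w (ns (ms k)), u (ns (ms k)) l⟫) atTop
            (𝓝 ⟪L X x - zlim, (l : E)⟫) := hwtend.inner ((hulim l).comp hnsms)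
        have h2 : ∀ k, ⟪w (ns (ms k)), u (ns (ms k)) l⟫ = 0 := fun k =>
          hwperp _ _ (humem _ l)
        rw [funext h2] at h1
        exact tendsto_nhds_unique h1 tendsto_const_nhds
      intro y hy
      rw [← hHspan] at hy
      induction hy using Submodule.span_induction with
      | mem y hy => exact hperpl ⟨y, hy⟩
      | zero => rw [inner_zero_right]
      | add a b _ _ ha hb => rw [inner_add_right, ha, hb, add_zero]
      | smul r a _ ha => rw [real_inner_smul_right, ha, mul_zero]
    have hproj : (Submodule.orthogonalProjectionOnto H (L X x) : E) = zlim :=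
      Submodule.eq_starProjection_of_mem_of_inner_eq_zero hzlimH hperp
    rw [hwinfdef, hproj]
    exact hwtend
  -- conclude
  have hkey : ∀ n, ‖vv n‖⁻¹ • vv n = ‖w n‖⁻¹ • w n := by
    intro n
    rw [hw, norm_smul, norm_inv, Real.norm_eq_abs, abs_of_pos (hρpos n), smul_smul]
    congr 1
    rw [mul_inv, inv_inv, mul_assoc, mul_comm (ρ n), mul_assoc, inv_mul_cancel₀ (hρpos n).ne',
      mul_one]
  have hnormw : Tendsto (fun n => ‖w n‖) atTop (𝓝 ‖winf‖) := hwtendsto.norm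
  have hfinal : Tendsto (fun n => ‖w n‖⁻¹ • w n) atTop (𝓝 (‖winf‖⁻¹ • winf)) :=
    (hnormw.inv₀ (norm_ne_zero_iff.2 hwinf_ne)).smul hwtendsto
  have hfeq : (fun n => ‖vv n‖⁻¹ • vv n) = fun n => ‖w n‖⁻¹ • w n := funext hkey
  rw [show (fun n => ‖resid (P n '' ↑K) ((Finset.coe_nonempty.2 hK).image (P n)) (P n x)‖⁻¹
      • resid (P n '' ↑K) ((Finset.coe_nonempty.2 hK).image (P n)) (P n x))
      = fun n => ‖vv n‖⁻¹ • vv n from rfl, hfeq]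
  exact hfinal

end VHat


section Drop

variable [FiniteDimensional ℝ E] {ι : Type*} [DecidableEq ι] {P : ℕ → ι → E} {L : ι → ι → E}

lemma cos_angle_eq_inner_normalized (a b : E) :
    Real.cos (InnerProductGeometry.angle a b) = ⟪‖a‖⁻¹ • a, ‖b‖⁻¹ • b⟫ := by
  rw [InnerProductGeometry.cos_angle, real_inner_smul_left, real_inner_smul_right]
  rw [div_eq_mul_inv, mul_inv]
  ring

lemma Cvg.dihedral_drop (hL : Cvg P L) (hP : Inj P) (K : Finset ι) (hK : K.Nonempty)
    {i j : ι} (hij : i ≠ j) (hiK : i ∉ K) (hjK : j ∉ K)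
    (hU : ∀ n, Module.finrank ℝ (vectorSpan ℝ (P n '' ↑K)) = K.card - 1)
    (hang : Tendsto (fun n => InnerProductGeometry.angle
        (resid (P n '' ↑K) ((Finset.coe_nonempty.2 hK).image (P n)) (P n i))
        (resid (P n '' ↑K) ((Finset.coe_nonempty.2 hK).image (P n)) (P n j)))
      atTop (𝓝 Real.pi)) :
    Module.finrank ℝ (dirSpan L ↑(insert j (insert i K))) ≤ K.card := by
  by_contra hcon
  push_neg at hcon
  have hKpos : 1 ≤ K.card := Finset.card_pos.2 hK
  -- dims
  set H := dirSpan L ↑K with hHdef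
  set H1 := dirSpan L ↑(insert i K) with hH1def
  set H2 := dirSpan L ↑(insert j (insert i K)) with hH2def
  have hd2 : Module.finrank ℝ H2 ≤ Module.finrank ℝ H1 + 1 :=
    hL.finrank_insert_le hP (insert i K) ⟨i, Finset.mem_insert_self i K⟩ j
  have hd1card : Module.finrank ℝ H1 ≤ K.card := by
    have h1 := hL.finrank_le_card hP (insert i K) ⟨i, Finset.mem_insert_self i K⟩
    rwa [Finset.card_insert_of_notMem hiK, Nat.add_sub_cancel] at h1
  have hd1 : Module.finrank ℝ H1 = K.card := by omega
  have hdHcard : Module.finrank ℝ H ≤ K.card - 1 := hL.finrank_le_card hP K hK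
  have hdH1le : Module.finrank ℝ H1 ≤ Module.finrank ℝ H + 1 := hL.finrank_insert_le hP K hK i
  have hdH : Module.finrank ℝ H = K.card - 1 := by omega
  -- a direction to i outside H
  have hXex : ∃ X ∈ K, L X i ∉ H := by
    by_contra hc
    push_neg at hc
    have hH1H : H1 ≤ H := by
      apply Submodule.span_le.2
      rintro w ⟨Xa, Ya, hXa, hYa, hne, rfl⟩
      simp only [Finset.coe_insert, Set.mem_insert_iff, Finset.mem_coe] at hXa hYa
      rcases hXa with hXv | hXa <;> rcases hYa with hYv | hYa
      · exact absurd (hXv.trans hYv.symm) hne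
      · rw [hXv, hL.L_symm (show Ya ≠ i from fun hh => hiK (hh ▸ hYa))]
        exact Submodule.neg_mem _ (hc Ya hYa)
      · rw [hYv]
        exact hc Xa hXa
      · exact mem_dirSpan L hXa hYa hne
    have := Submodule.finrank_mono hH1H
    omega
  obtain ⟨X, hXK, hXi⟩ := hXex
  set ri : ℕ → E := fun n =>
    resid (P n '' ↑K) ((Finset.coe_nonempty.2 hK).image (P n)) (P n i) with hridef
  set rj : ℕ → E := fun n =>
    resid (P n '' ↑K) ((Finset.coe_nonempty.2 hK).image (P n)) (P n j) with hrjdef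
  set wi : E := L X i - (Submodule.orthogonalProjectionOnto H (L X i) : E) with hwidef
  have hwine : wi ≠ 0 := by
    intro h0
    apply hXi
    have h1 : L X i = (Submodule.orthogonalProjectionOnto H (L X i) : E) := by
      rw [hwidef] at h0
      rwa [sub_eq_zero] at h0
    rw [h1]
    exact SetLike.coe_mem _
  have hti : Tendsto (fun n => ‖ri n‖⁻¹ • ri n) atTop (𝓝 (‖wi‖⁻¹ • wi)) :=
    hL.vhat_tendsto hP K hK hU hdH hiK hXK hXi
  have hcos : Tendsto (fun n => ⟪‖ri n‖⁻¹ • ri n, ‖rj n‖⁻¹ • rj n⟫) atTop (𝓝 (-1 : ℝ)) := by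
    have h1 : Tendsto (fun n => Real.cos (InnerProductGeometry.angle (ri n) (rj n)))
        atTop (𝓝 (Real.cos Real.pi)) := (Real.continuous_cos.tendsto _).comp hang
    rw [Real.cos_pi] at h1
    have h2 : (fun n => Real.cos (InnerProductGeometry.angle (ri n) (rj n)))
        = fun n => ⟪‖ri n‖⁻¹ • ri n, ‖rj n‖⁻¹ • rj n⟫ :=
      funext fun n => cos_angle_eq_inner_normalized _ _
    rwa [h2] at h1
  have hnormalized : ∀ v : E, v ≠ 0 → ‖(‖v‖⁻¹ • v)‖ = 1 := by
    intro v hv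
    rw [norm_smul, norm_inv, norm_norm, inv_mul_cancel₀ (norm_ne_zero_iff.2 hv)]
  by_cases hcaseA : ∀ Y ∈ K, L Y j = L Y i
  · -- both normalized residuals converge to the same unit vector
    have hXj : L X j ∉ H := by rw [hcaseA X hXK]; exact hXi
    have htj : Tendsto (fun n => ‖rj n‖⁻¹ • rj n) atTop
        (𝓝 (‖L X j - (Submodule.orthogonalProjectionOnto H (L X j) : E)‖⁻¹
          • (L X j - (Submodule.orthogonalProjectionOnto H (L X j) : E)))) :=
      hL.vhat_tendsto hP K hK hU hdH hjK hXK hXj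
    rw [hcaseA X hXK] at htj
    have hlim := Filter.Tendsto.inner (𝕜 := ℝ) hti htj
    have huniq := tendsto_nhds_unique hcos hlim
    have hip : ⟪(‖wi‖⁻¹ • wi : E), (‖wi‖⁻¹ • wi : E)⟫ = 1 := by
      rw [real_inner_self_eq_norm_mul_norm, hnormalized wi hwine, mul_one]
    rw [show L X i - (Submodule.orthogonalProjectionOnto H (L X i) : E) = wi from rfl] at huniq
    rw [hip] at huniq
    norm_num at huniq
  · push_neg at hcaseA
    obtain ⟨Y0, hY0K, hY0ne⟩ := hcaseA
    have hsubKi : (↑K : Set ι) ⊆ ↑(insert i K) := by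
      intro a ha
      simp only [Finset.coe_insert, Set.mem_insert_iff, Finset.mem_coe] at ha ⊢
      exact Or.inr ha
    have hXne_i : X ≠ i := fun hh => hiK (hh ▸ hXK)
    have hwiH1 : ‖wi‖⁻¹ • wi ∈ H1 := by
      apply Submodule.smul_mem
      rw [hwidef]
      apply Submodule.sub_mem
      · exact mem_dirSpan L (Finset.mem_coe.2 (Finset.mem_insert_of_mem hXK))
          (Finset.mem_coe.2 (Finset.mem_insert_self i K)) hXne_i
      · exact dirSpan_mono L hsubKi (SetLike.coe_mem _)
    have hallj : ∀ Y ∈ K, L Y j ∈ H1 := by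
      by_cases hexj : ∃ Y ∈ K, L Y j ∉ H
      · obtain ⟨Y1, hY1K, hY1⟩ := hexj
        set wj : E := L Y1 j - (Submodule.orthogonalProjectionOnto H (L Y1 j) : E) with hwjdef
        have hwjne : wj ≠ 0 := by
          intro h0
          apply hY1
          have h1 : L Y1 j = (Submodule.orthogonalProjectionOnto H (L Y1 j) : E) := by
            rw [hwjdef] at h0
            rwa [sub_eq_zero] at h0
          rw [h1]
          exact SetLike.coe_mem _
        have htj : Tendsto (fun n => ‖rj n‖⁻¹ • rj n) atTop (𝓝 (‖wj‖⁻¹ • wj)) :=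
          hL.vhat_tendsto hP K hK hU hdH hjK hY1K hY1
        have hlim := Filter.Tendsto.inner (𝕜 := ℝ) hti htj
        have huniq := tendsto_nhds_unique hcos hlim
        -- the two unit limits are opposite
        have hsum : ‖(‖wi‖⁻¹ • wi) + (‖wj‖⁻¹ • wj)‖ ^ 2 = 0 := by
          rw [norm_add_sq_real, hnormalized wi hwine, hnormalized wj hwjne, ← huniq]
          norm_num
        have hopp : ‖wj‖⁻¹ • wj = -(‖wi‖⁻¹ • wi) := by
          have h0 : (‖wi‖⁻¹ • wi) + (‖wj‖⁻¹ • wj) = 0 := by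
            have := pow_eq_zero_iff (two_ne_zero) |>.1 hsum
            exact norm_eq_zero.1 this
          exact eq_neg_of_add_eq_zero_right h0
        intro Y hYK
        by_cases hYj : L Y j ∈ H
        · exact dirSpan_mono L hsubKi hYj
        · set wj' : E := L Y j - (Submodule.orthogonalProjectionOnto H (L Y j) : E) with hwj'def
          have hwj'ne : wj' ≠ 0 := by
            intro h0
            apply hYj
            have h1 : L Y j = (Submodule.orthogonalProjectionOnto H (L Y j) : E) := by
              rw [hwj'def] at h0
              rwa [sub_eq_zero] at h0
            rw [h1]
            exact SetLike.coe_mem _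
          have htj' : Tendsto (fun n => ‖rj n‖⁻¹ • rj n) atTop (𝓝 (‖wj'‖⁻¹ • wj')) :=
            hL.vhat_tendsto hP K hK hU hdH hjK hYK hYj
          have huniq2 : ‖wj'‖⁻¹ • wj' = ‖wj‖⁻¹ • wj := tendsto_nhds_unique htj' htj
          have hrec : L Y j = (Submodule.orthogonalProjectionOnto H (L Y j) : E) + ‖wj'‖ • (‖wj'‖⁻¹ • wj') := by
            rw [smul_smul, mul_inv_cancel₀ (norm_ne_zero_iff.2 hwj'ne), one_smul, hwj'def]
            abel
          rw [hrec, huniq2, hopp]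
          apply Submodule.add_mem
          · exact dirSpan_mono L hsubKi (SetLike.coe_mem _)
          · apply Submodule.smul_mem
            exact Submodule.neg_mem _ hwiH1
      · push_neg at hexj
        intro Y hYK
        exact dirSpan_mono L hsubKi (hexj Y hYK)
    have hLij : L i j ∈ H1 := by
      have hY0i : Y0 ≠ i := fun hh => hiK (hh ▸ hY0K)
      have hY0j : Y0 ≠ j := fun hh => hjK (hh ▸ hY0K)
      rcases hL.triangle_dep hP hY0i hY0j hij with hmem | heq
      · refine (Submodule.span_le.2 ?_) hmem
        rintro w (rfl | rfl)
        · exact mem_dirSpan L (hsubKi (Finset.mem_coe.2 hY0K))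
            (Finset.mem_coe.2 (Finset.mem_insert_self i K)) hY0i
        · exact hallj Y0 hY0K
      · exact absurd heq.symm hY0ne
    have hH2H1 : H2 ≤ H1 := by
      apply Submodule.span_le.2
      rintro w ⟨Xa, Ya, hXa, hYa, hne, rfl⟩
      simp only [Finset.coe_insert, Set.mem_insert_iff, Finset.mem_coe] at hXa hYa
      have hmemi : ∀ a, a = i ∨ a ∈ K → a ∈ (↑(insert i K) : Set ι) := by
        intro a ha
        simp only [Finset.coe_insert, Set.mem_insert_iff, Finset.mem_coe]
        exact ha
      rcases hXa with hXj' | hXa <;> rcases hYa with hYj' | hYa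
      · exact absurd (hXj'.trans hYj'.symm) hne
      · -- Xa = j, Ya = i or ∈ K
        rcases hYa with hYi | hYaK
        · rw [hXj', hYi, hL.L_symm hij]
          exact Submodule.neg_mem _ hLij
        · rw [hXj', hL.L_symm (show Ya ≠ j from fun hh => hjK (hh ▸ hYaK))]
          exact Submodule.neg_mem _ (hallj Ya hYaK)
      · -- Ya = j
        rcases hXa with hXi' | hXaK
        · rw [hXi', hYj']
          exact hLij
        · rw [hYj']
          exact hallj Xa hXaK
      · exact mem_dirSpan L (hmemi Xa hXa) (hmemi Ya hYa) hne
    have := Submodule.finrank_mono hH2H1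
    omega

end Drop

end
end DegDih


/-- Let `S_n` be nondegenerate `d`-simplices in `ℝ^d` whose normalized
edge vectors all converge. If some sequence of dihedral angles of the fixed subsimplex
on the first `d' + 1 = e + 3` vertices tends to `π`, then the limit edge directions of the
subsimplex span a space of dimension at most `d' − 1`, any `d` of the limit edge
directions span a space of dimension at most `d − 1`, and `sin_d` of any `d` limiting
edge directions is `0`. -/
theorem degenerate_dihedral_limit (d e : ℕ) (h : e + 3 ≤ d + 1)
    (A : ℕ → Fin (d + 1) → EuclideanSpace ℝ (Fin d))
    (hA : ∀ n, AffineIndependent ℝ (A n))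
    (L : Fin (d + 1) → Fin (d + 1) → EuclideanSpace ℝ (Fin d))
    (hL : ∀ X Y : Fin (d + 1), X ≠ Y →
      Tendsto (fun n => ‖A n Y - A n X‖⁻¹ • (A n Y - A n X)) atTop (nhds (L X Y)))
    (hdih : ∃ i j : Fin (e + 3), i ≠ j ∧
      Tendsto (fun n => dihedralAngle d e (fun k => A n (Fin.castLE h k)) i j)
        atTop (nhds Real.pi)) :
    Module.finrank ℝ (Submodule.span ℝ
        {v | ∃ X Y : Fin (e + 3), X ≠ Y ∧ v = L (Fin.castLE h X) (Fin.castLE h Y)}) ≤ e + 1 ∧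
    ∀ t : Fin d → EuclideanSpace ℝ (Fin d),
      (∀ k, ∃ X Y : Fin (d + 1), X ≠ Y ∧ t k = L X Y) →
      Module.finrank ℝ (Submodule.span ℝ (Set.range t)) ≤ d - 1 ∧ sinTuple d t = 0 := by
  classical
  obtain ⟨i, j, hij, hdtend⟩ := hdih
  have hinj : DegDih.Inj A := fun n X Y hXY heq => hXY ((hA n).injective heq)
  have hcvg : DegDih.Cvg A L := fun X Y hXY => hL X Y hXY
  have hcastinj : Function.Injective (Fin.castLE h) := Fin.castLE_injective h
  set ci := Fin.castLE h i with hci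
  set cj := Fin.castLE h j with hcj
  have hcij : ci ≠ cj := fun hh => hij (hcastinj hh)
  set Kfin : Finset (Fin (d+1)) := (({i, j} : Finset (Fin (e+3)))ᶜ).image (Fin.castLE h)
    with hKfin
  have hKcard : Kfin.card = e + 1 := by
    rw [hKfin, Finset.card_image_of_injective _ hcastinj, Finset.card_compl,
      Finset.card_insert_of_notMem (by simp [hij]), Finset.card_singleton]
    simp
  have hKne : Kfin.Nonempty := by
    rw [← Finset.card_pos, hKcard]; omega
  have hiKfin : ci ∉ Kfin := by
    intro hmem
    rw [hKfin, Finset.mem_image] at hmem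
    obtain ⟨k, hk, hkeq⟩ := hmem
    have hki : k = i := hcastinj hkeq
    subst hki
    simp at hk
  have hjKfin : cj ∉ Kfin := by
    intro hmem
    rw [hKfin, Finset.mem_image] at hmem
    obtain ⟨k, hk, hkeq⟩ := hmem
    have hkj : k = j := hcastinj hkeq
    subst hkj
    simp at hk
  have hsetK : ∀ n : ℕ, ((fun k => A n (Fin.castLE h k)) '' {k | k ≠ i ∧ k ≠ j})
      = A n '' ↑Kfin := by
    intro n
    rw [show ((fun k => A n (Fin.castLE h k)) '' {k | k ≠ i ∧ k ≠ j})
        = A n '' (Fin.castLE h '' {k | k ≠ i ∧ k ≠ j}) from (Set.image_image _ _ _).symm]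
    congr 1
    rw [hKfin, Finset.coe_image]
    have hseteq : {k : Fin (e+3) | k ≠ i ∧ k ≠ j} = ↑(({i, j} : Finset (Fin (e+3)))ᶜ) := by
      ext k
      simp only [Set.mem_setOf_eq, Finset.coe_compl, Set.mem_compl_iff, Finset.mem_coe,
        Finset.mem_insert, Finset.mem_singleton]
      tauto
    rw [hseteq]
  have hU : ∀ n, Module.finrank ℝ (vectorSpan ℝ (A n '' ↑Kfin)) = Kfin.card - 1 := by
    intro n
    obtain ⟨σ⟩ : Nonempty (Fin (e+1) ≃ {x // x ∈ Kfin}) :=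
      ⟨(Fintype.equivFinOfCardEq (by rw [Fintype.card_coe, hKcard])).symm⟩
    have hemb : Function.Injective (fun l : Fin (e+1) => ((σ l : {x // x ∈ Kfin}) : Fin (d+1))) :=
      fun a b hab => σ.injective (Subtype.ext hab)
    have haff := (hA n).comp_embedding ⟨_, hemb⟩
    have hrange : Set.range ((A n) ∘ (fun l : Fin (e+1) => ((σ l : {x // x ∈ Kfin}) : Fin (d+1))))
        = A n '' ↑Kfin := by
      have hr2 : Set.range (fun l : Fin (e+1) => ((σ l : {x // x ∈ Kfin}) : Fin (d+1)))
          = ↑Kfin := by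
        ext x
        simp only [Set.mem_range, Finset.mem_coe]
        constructor
        · rintro ⟨l, rfl⟩
          exact (σ l).2
        · intro hx
          exact ⟨σ.symm ⟨x, hx⟩, by simp⟩
      rw [Set.range_comp, hr2]
    have hfr := haff.finrank_vectorSpan (n := e) (by simp)
    rw [show (A n) ∘ (⟨_, hemb⟩ : Fin (e+1) ↪ Fin (d+1))
        = (A n) ∘ (fun l : Fin (e+1) => ((σ l : {x // x ∈ Kfin}) : Fin (d+1))) from rfl] at hfr
    rw [hrange] at hfr
    rw [hfr, hKcard]
    omega
  have hang : Filter.Tendsto (fun n => InnerProductGeometry.angle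
      (DegDih.resid (A n '' ↑Kfin) ((Finset.coe_nonempty.2 hKne).image (A n)) (A n ci))
      (DegDih.resid (A n '' ↑Kfin) ((Finset.coe_nonempty.2 hKne).image (A n)) (A n cj)))
      Filter.atTop (nhds Real.pi) := by
    have heqf : (fun n => dihedralAngle d e (fun k => A n (Fin.castLE h k)) i j)
        = fun n => InnerProductGeometry.angle
          (DegDih.resid (A n '' ↑Kfin) ((Finset.coe_nonempty.2 hKne).image (A n)) (A n ci))
          (DegDih.resid (A n '' ↑Kfin) ((Finset.coe_nonempty.2 hKne).image (A n)) (A n cj)) := by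
      funext n
      have hne1 : ((fun k => A n (Fin.castLE h k)) '' {k | k ≠ i ∧ k ≠ j}).Nonempty := by
        rw [hsetK n]
        exact (Finset.coe_nonempty.2 hKne).image (A n)
      have hdef : dihedralAngle d e (fun k => A n (Fin.castLE h k)) i j
          = InnerProductGeometry.angle
            (DegDih.resid ((fun k => A n (Fin.castLE h k)) '' {k | k ≠ i ∧ k ≠ j}) hne1 (A n ci))
            (DegDih.resid ((fun k => A n (Fin.castLE h k)) '' {k | k ≠ i ∧ k ≠ j}) hne1 (A n cj)) :=
        rfl
      rw [hdef, DegDih.resid_congr (hsetK n) hne1 _ (A n ci),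
        DegDih.resid_congr (hsetK n) hne1 _ (A n cj)]
    rw [← heqf]
    exact hdtend
  have hdrop := hcvg.dihedral_drop hinj Kfin hKne hcij hiKfin hjKfin hU hang
  rw [hKcard] at hdrop
  have hfull : insert cj (insert ci Kfin) = Finset.univ.image (Fin.castLE h) := by
    ext x
    simp only [Finset.mem_insert, hKfin, Finset.mem_image, Finset.mem_compl, Finset.mem_univ,
      true_and, Finset.mem_singleton]
    constructor
    · rintro (rfl | rfl | ⟨k, hk, rfl⟩)
      · exact ⟨j, rfl⟩
      · exact ⟨i, rfl⟩
      · exact ⟨k, rfl⟩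
    · rintro ⟨k, rfl⟩
      by_cases hki : k = i
      · subst hki
        right; left; rfl
      by_cases hkj : k = j
      · subst hkj
        left; rfl
      · right; right
        exact ⟨k, by simp [hki, hkj], rfl⟩
  have hdropfull : Module.finrank ℝ
      (DegDih.dirSpan L ↑(Finset.univ.image (Fin.castLE h) : Finset (Fin (d+1)))) ≤ e + 1 := by
    rw [← hfull]
    exact hdrop
  have hset1 : {v | ∃ X Y : Fin (e + 3), X ≠ Y ∧ v = L (Fin.castLE h X) (Fin.castLE h Y)}
      = DegDih.dirSet L ↑(Finset.univ.image (Fin.castLE h) : Finset (Fin (d+1))) := by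
    ext w
    constructor
    · rintro ⟨X, Y, hXY, rfl⟩
      exact ⟨Fin.castLE h X, Fin.castLE h Y,
        Finset.mem_coe.2 (Finset.mem_image_of_mem _ (Finset.mem_univ X)),
        Finset.mem_coe.2 (Finset.mem_image_of_mem _ (Finset.mem_univ Y)),
        fun hc => hXY (hcastinj hc), rfl⟩
    · rintro ⟨X', Y', hX', hY', hne, rfl⟩
      simp only [Finset.coe_image, Set.mem_image, Finset.mem_coe, Finset.mem_univ,
        Finset.coe_univ, Set.mem_univ, true_and] at hX' hY'
      obtain ⟨X, rfl⟩ := hX'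
      obtain ⟨Y, rfl⟩ := hY'
      exact ⟨X, Y, fun hc => hne (by rw [hc]), rfl⟩
  constructor
  · have hspan1 : Submodule.span ℝ
        {v | ∃ X Y : Fin (e + 3), X ≠ Y ∧ v = L (Fin.castLE h X) (Fin.castLE h Y)}
        = DegDih.dirSpan L ↑(Finset.univ.image (Fin.castLE h) : Finset (Fin (d+1))) := by
      rw [DegDih.dirSpan, hset1]
    rw [hspan1]
    exact hdropfull
  · intro t ht
    have hcard2 : (Finset.univ.image (Fin.castLE h) : Finset (Fin (d+1))).card = e + 3 := by
      rw [Finset.card_image_of_injective _ hcastinj, Finset.card_univ, Fintype.card_fin]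
    have hcarduniv : (Finset.univ : Finset (Fin (d+1))).card = d + 1 := by simp
    have hgrow := hcvg.finrank_grow hinj
      ((Finset.univ : Finset (Fin (d+1))).card - (Finset.univ.image (Fin.castLE h)).card)
      (Finset.univ.image (Fin.castLE h)) Finset.univ
      (by rw [← hfull]; exact ⟨cj, Finset.mem_insert_self _ _⟩)
      (Finset.subset_univ _) rfl
    have hfinal : Module.finrank ℝ
        (DegDih.dirSpan L ↑(Finset.univ : Finset (Fin (d+1)))) ≤ d - 1 := by
      rw [hcard2, hcarduniv] at hgrow
      omega
    have hsub : Submodule.span ℝ (Set.range t)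
        ≤ DegDih.dirSpan L ↑(Finset.univ : Finset (Fin (d+1))) := by
      apply Submodule.span_le.2
      rintro w ⟨k, rfl⟩
      obtain ⟨X, Y, hXY, hteq⟩ := ht k
      rw [hteq]
      exact Submodule.subset_span ⟨X, Y, by simp, by simp, hXY, rfl⟩
    have h1 : Module.finrank ℝ (Submodule.span ℝ (Set.range t)) ≤ d - 1 :=
      le_trans (Submodule.finrank_mono hsub) hfinal
    refine ⟨h1, ?_⟩
    rw [sinTuple, if_neg]
    intro hLI
    have hd := finrank_span_eq_card hLI
    rw [Fintype.card_fin] at hd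
    omega
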